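/- For every real y with 0 < y ≤ 1 and every integer k ≥ 1, the Marčenko–Pastur moment identity holds: ∫_{(1−√y)²}^{(1+√y)²} x^k · √((x − (1−√y)²)·((1+√y)² − x)) / (2π x y) dx = Σ_{j=0}^{k−1} (y^j/(j+1))·C(k,j)·C(k−1,j), where C(m,r) denotes the binomial coefficient. -/

import Mathlib

open Real Finset intervalIntegral MeasureTheory

noncomputable def Isin (m : ℕ) : ℝ := ∫ x in (-(π/2))..(π/2), Real.sin x ^ m

lemma Isin_rec (m : ℕ) : Isin (m+2) = (m+1)/(m+2) * Isin m := by
  unfold Isin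
  rw [integral_sin_pow m]
  simp [Real.cos_pi_div_two]

lemma Isin_zero : Isin 0 = π := by simp [Isin]

lemma Isin_one : Isin 1 = 0 := by simp [Isin]

lemma Isin_odd (n : ℕ) : Isin (2*n+1) = 0 := by
  induction n with
  | zero => simpa using Isin_one
  | succ n ih =>
    have : 2*(n+1)+1 = (2*n+1)+2 := by ring
    rw [this, Isin_rec, ih, mul_zero]

lemma Isin_even (n : ℕ) : Isin (2*n) = π * (Nat.centralBinom n : ℝ) / 4^n := by
  induction n with
  | zero => simp [Isin_zero, Nat.centralBinom]
  | succ n ih =>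
    have h2 : 2*(n+1) = (2*n)+2 := by ring
    rw [h2, Isin_rec, ih]
    have hc : ((n:ℝ) + 1) * (Nat.centralBinom (n+1) : ℝ) = 2 * (2*n+1) * (Nat.centralBinom n : ℝ) := by
      exact_mod_cast congrArg (Nat.cast : ℕ → ℝ) (Nat.succ_mul_centralBinom_succ n)
    have h4 : (4:ℝ)^(n+1) = 4 * 4^n := by ring
    push_cast
    rw [h4]
    have h4n : (4:ℝ)^n ≠ 0 := by positivity
    field_simp
    ring_nf
    ring_nf at hc
    linear_combination (-2) * hc

noncomputable def Jmp (m : ℕ) : ℝ := ∫ t in (-1:ℝ)..1, t^m * Real.sqrt (1 - t^2)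

lemma Jmp_eq (m : ℕ) : Jmp m = Isin m / (m+2) := by
  have hg : Continuous fun u : ℝ => u^m * Real.sqrt (1 - u^2) := by
    exact (continuous_pow m).mul ((continuous_const.sub (continuous_pow 2)).sqrt)
  have hsub := intervalIntegral.integral_comp_smul_deriv
    (f := Real.sin) (f' := Real.cos) (a := -(π/2)) (b := π/2)
    (g := fun u : ℝ => u^m * Real.sqrt (1 - u^2))
    (fun x _ => Real.hasDerivAt_sin x) Real.continuous_cos.continuousOn hg
  rw [Real.sin_pi_div_two, Real.sin_neg, Real.sin_pi_div_two] at hsub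
  have h1 : (∫ x in (-(π/2))..(π/2), Real.cos x • (Real.sin x ^ m * Real.sqrt (1 - Real.sin x ^ 2)))
      = ∫ x in (-(π/2))..(π/2), (Real.sin x ^ m - Real.sin x ^ (m+2)) := by
    apply intervalIntegral.integral_congr
    intro x hx
    have hx' : x ∈ Set.Icc (-(π/2)) (π/2) := by
      rwa [Set.uIcc_of_le (by linarith [Real.pi_pos])] at hx
    have hcos : 0 ≤ Real.cos x := Real.cos_nonneg_of_mem_Icc hx'
    have : Real.sqrt (1 - Real.sin x ^ 2) = Real.cos x := by
      rw [← Real.cos_sq', Real.sqrt_sq hcos]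
    simp only [Function.comp_apply, smul_eq_mul]
    rw [this]
    have hcs : Real.cos x * Real.cos x = 1 - Real.sin x ^ 2 := by
      have := Real.cos_sq' x; nlinarith [this]
    calc Real.cos x * (Real.sin x ^ m * Real.cos x)
        = Real.sin x ^ m * (Real.cos x * Real.cos x) := by ring
      _ = Real.sin x ^ m * (1 - Real.sin x ^ 2) := by rw [hcs]
      _ = Real.sin x ^ m - Real.sin x ^ (m + 2) := by ring
  have h2 : (∫ x in (-(π/2))..(π/2), (Real.sin x ^ m - Real.sin x ^ (m+2)))
      = Isin m - Isin (m+2) := by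
    unfold Isin
    apply intervalIntegral.integral_sub <;>
      exact (Real.continuous_sin.pow _).intervalIntegrable _ _
  have : Jmp m = Isin m - Isin (m+2) := by
    unfold Jmp
    rw [← hsub]
    rw [show (∫ (x : ℝ) in -(π / 2)..π / 2, Real.cos x • ((fun u => u ^ m * Real.sqrt (1 - u ^ 2)) ∘ Real.sin) x) = ∫ (x : ℝ) in -(π / 2)..π / 2, Real.cos x • (Real.sin x ^ m * Real.sqrt (1 - Real.sin x ^ 2)) from rfl, h1, h2]
  rw [this, Isin_rec]
  have : ((m:ℝ)+2) ≠ 0 := by positivity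
  field_simp
  ring

lemma Jmp_odd (n : ℕ) : Jmp (2*n+1) = 0 := by
  rw [Jmp_eq, Isin_odd]; simp

lemma Jmp_even (n : ℕ) : Jmp (2*n) = π * (catalan n : ℝ) / (2 * 4^n) := by
  rw [Jmp_eq, Isin_even]
  have hc : ((n:ℝ)+1) * (catalan n : ℝ) = (Nat.centralBinom n : ℝ) := by
    exact_mod_cast succ_mul_catalan_eq_centralBinom n
  have h4 : (4:ℝ)^n ≠ 0 := by positivity
  have hn2 : ((2*n:ℕ):ℝ) + 2 ≠ 0 := by push_cast; positivity
  push_cast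
  field_simp
  linear_combination (-1) * hc

-- Vandermonde consequence
lemma vand (j r : ℕ) :
    ∑ n ∈ range (r+1), (j+1).choose (n+1) * r.choose n = (j+1+r).choose (r+1) := by
  rw [Nat.add_choose_eq, Finset.Nat.sum_antidiagonal_eq_sum_range_succ_mk]
  rw [Finset.sum_range_succ' (fun i => (j+1).choose i * r.choose (r+1-i)) (r+1)]
  simp only [Nat.choose_zero_right, one_mul]
  rw [Nat.choose_eq_zero_of_lt (by omega : r < r+1-0)]
  simp only [add_zero]
  apply Finset.sum_congr rfl
  intro n hn
  have hn' : n ≤ r := by simpa using Nat.lt_succ_iff.mp (Finset.mem_range.mp hn)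
  congr 1
  rw [show r+1-(n+1) = r - n by omega, Nat.choose_symm hn']

lemma key (K j : ℕ) (hj : j ≤ K) :
    ∑ n ∈ range (j+1), (catalan n : ℝ) * (K.choose (2*n)) * ((K-2*n).choose (j-n))
      = ((K+1).choose j) * (K.choose j) / (j+1) := by
  set r := K - j with hr
  have hK : K = j + r := by omega
  -- restrict to n ≤ min j r
  have hsub : ∑ n ∈ range (j+1), (catalan n : ℝ) * (K.choose (2*n)) * ((K-2*n).choose (j-n))
      = ∑ n ∈ range (min j r + 1), (catalan n : ℝ) * (K.choose (2*n)) * ((K-2*n).choose (j-n)) := by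
    symm
    apply Finset.sum_subset
    · intro x hx; simp only [mem_range] at hx ⊢; omega
    · intro n hn hn'
      simp only [mem_range] at hn hn'
      have hrn : r < n := by omega
      by_cases h2 : 2*n ≤ K
      · have : K - 2*n < j - n := by omega
        rw [Nat.choose_eq_zero_of_lt this, Nat.cast_zero, mul_zero]
      · rw [Nat.choose_eq_zero_of_lt (by omega), Nat.cast_zero, mul_zero, zero_mul]
  rw [hsub]
  -- per-term factorial form
  have hterm : ∀ n ∈ range (min j r + 1),
      (catalan n : ℝ) * (K.choose (2*n)) * ((K-2*n).choose (j-n))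
        = ((j+1).choose (n+1) * r.choose n : ℕ) * ((r+1) * (K.factorial : ℝ) / ((j+1).factorial * (r+1).factorial)) := by
    intro n hn
    simp only [mem_range] at hn
    have hnj : n ≤ j := by omega
    have hnr : n ≤ r := by omega
    have h2n : 2*n ≤ K := by omega
    have hjn : j - n ≤ K - 2*n := by omega
    have hcat : ((n:ℝ)+1) * (catalan n : ℝ) = ((2*n).choose n : ℝ) := by
      have h := succ_mul_catalan_eq_centralBinom n
      unfold Nat.centralBinom at h
      exact_mod_cast congrArg (Nat.cast : ℕ → ℝ) h
    rw [Nat.cast_mul]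
    rw [Nat.cast_choose ℝ h2n, Nat.cast_choose ℝ hjn,
        Nat.cast_choose ℝ (by omega : n+1 ≤ j+1), Nat.cast_choose ℝ hnr]
    have hcb : ((2*n).choose n : ℝ) = ((2*n).factorial : ℝ) / ((n.factorial : ℝ) * n.factorial) := by
      rw [Nat.cast_choose ℝ (by omega : n ≤ 2*n), show 2*n - n = n by omega]
    have hcat' : (catalan n : ℝ) = ((2*n).factorial : ℝ) / ((n.factorial : ℝ) * n.factorial * ((n:ℝ)+1)) := by
      rw [eq_div_iff (by positivity)]
      have h1 : ((n:ℝ)+1) ≠ 0 := by positivity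
      field_simp at hcb
      nlinarith [hcat, hcb]
    rw [hcat']
    rw [show K - 2*n - (j-n) = r - n by omega, show j+1-(n+1) = j - n by omega]
    have e1 : ((j+1).factorial : ℝ) = ((j:ℝ)+1) * j.factorial := by
      exact_mod_cast congrArg (Nat.cast : ℕ → ℝ) (Nat.factorial_succ j)
    have e2 : ((r+1).factorial : ℝ) = ((r:ℝ)+1) * r.factorial := by
      exact_mod_cast congrArg (Nat.cast : ℕ → ℝ) (Nat.factorial_succ r)
    have e3 : ((n+1).factorial : ℝ) = ((n:ℝ)+1) * n.factorial := by
      exact_mod_cast congrArg (Nat.cast : ℕ → ℝ) (Nat.factorial_succ n)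
    rw [e1, e2, e3]
    have p1 : (0:ℝ) < n.factorial := by exact_mod_cast Nat.factorial_pos n
    have p2 : (0:ℝ) < (2*n).factorial := by exact_mod_cast Nat.factorial_pos (2*n)
    have p3 : (0:ℝ) < (K-2*n).factorial := by exact_mod_cast Nat.factorial_pos (K-2*n)
    have p4 : (0:ℝ) < (j-n).factorial := by exact_mod_cast Nat.factorial_pos (j-n)
    have p5 : (0:ℝ) < (r-n).factorial := by exact_mod_cast Nat.factorial_pos (r-n)
    have p6 : (0:ℝ) < j.factorial := by exact_mod_cast Nat.factorial_pos j
    have p7 : (0:ℝ) < r.factorial := by exact_mod_cast Nat.factorial_pos r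
    have p8 : (0:ℝ) < K.factorial := by exact_mod_cast Nat.factorial_pos K
    field_simp
  rw [Finset.sum_congr rfl hterm, ← Finset.sum_mul]
  -- extend sum to range (r+1) and apply vandermonde
  have hext : ∑ n ∈ range (min j r + 1), (((j+1).choose (n+1) * r.choose n : ℕ) : ℝ)
      = (((j+1+r).choose (r+1) : ℕ) : ℝ) := by
    rw [← vand j r]
    push_cast
    apply Finset.sum_subset
    · intro x hx; simp only [mem_range] at hx ⊢; omega
    · intro n hn hn'
      simp only [mem_range] at hn hn'
      have hjn : j < n := by omega
      rw [Nat.choose_eq_zero_of_lt (by omega), Nat.cast_zero, zero_mul]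
  rw [hext]
  rw [show j+1+r = K+1 by omega]
  have hc1 : ((K+1).choose (r+1) : ℝ) = ((K+1).factorial : ℝ) / ((r+1).factorial * j.factorial) := by
    rw [Nat.cast_choose ℝ (by omega : r+1 ≤ K+1), show K+1-(r+1) = j by omega]
  have hc2 : ((K+1).choose j : ℝ) = ((K+1).factorial : ℝ) / (j.factorial * (r+1).factorial) := by
    rw [Nat.cast_choose ℝ (by omega : j ≤ K+1), show K+1-j = r+1 by omega]
  have hc3 : ((K).choose j : ℝ) = ((K).factorial : ℝ) / (j.factorial * r.factorial) := by
    rw [Nat.cast_choose ℝ hj, ← hr]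
  rw [hc1, hc2, hc3]
  have e1 : ((j+1).factorial : ℝ) = ((j:ℝ)+1) * j.factorial := by
    exact_mod_cast congrArg (Nat.cast : ℕ → ℝ) (Nat.factorial_succ j)
  have e2 : ((r+1).factorial : ℝ) = ((r:ℝ)+1) * r.factorial := by
    exact_mod_cast congrArg (Nat.cast : ℕ → ℝ) (Nat.factorial_succ r)
  rw [e1, e2]
  have p6 : (0:ℝ) < j.factorial := by exact_mod_cast Nat.factorial_pos j
  have p7 : (0:ℝ) < r.factorial := by exact_mod_cast Nat.factorial_pos r
  have p8 : (0:ℝ) < (K+1).factorial := by exact_mod_cast Nat.factorial_pos (K+1)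
  have p9 : (0:ℝ) < K.factorial := by exact_mod_cast Nat.factorial_pos K
  field_simp

open Polynomial in
lemma poly_id (K : ℕ) (y : ℝ) :
    ∑ n ∈ range (K+1), (catalan n : ℝ) * (K.choose (2*n)) * (y+1)^(K-2*n) * y^n
      = ∑ j ∈ range (K+1), ((K+1).choose j : ℝ) * (K.choose j) / ((j:ℝ)+1) * y^j := by
  have hPQ : (∑ n ∈ range (K+1), C ((catalan n : ℝ) * (K.choose (2*n))) * ((X+1)^(K-2*n) * X^n))
      = ∑ j ∈ range (K+1), C (((K+1).choose j : ℝ) * (K.choose j) / ((j:ℝ)+1)) * X^j := by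
    ext d
    rw [Polynomial.finset_sum_coeff, Polynomial.finset_sum_coeff]
    have hR : ∀ j ∈ range (K+1), (C (((K+1).choose j : ℝ) * (K.choose j) / ((j:ℝ)+1)) * X^j).coeff d
        = if j = d then ((K+1).choose j : ℝ) * (K.choose j) / ((j:ℝ)+1) else 0 := by
      intro j _
      rw [Polynomial.coeff_C_mul, Polynomial.coeff_X_pow]
      by_cases h : d = j <;> simp [h, eq_comm]
    have hL : ∀ n ∈ range (K+1), (C ((catalan n : ℝ) * (K.choose (2*n))) * ((X+1)^(K-2*n) * X^n)).coeff d
        = if n ≤ d then (catalan n : ℝ) * (K.choose (2*n)) * ((K-2*n).choose (d-n) : ℝ) else 0 := by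
      intro n _
      rw [Polynomial.coeff_C_mul, Polynomial.coeff_mul_X_pow']
      by_cases h : n ≤ d
      · simp only [h, if_true]
        rw [Polynomial.coeff_X_add_one_pow, mul_assoc]
      · simp [h]
    rw [Finset.sum_congr rfl hR, Finset.sum_congr rfl hL]
    rw [Finset.sum_ite_eq' (range (K+1)) d (fun j => ((K+1).choose j : ℝ) * (K.choose j) / ((j:ℝ)+1))]
    by_cases hd : d ≤ K
    · rw [if_pos (by simp [Nat.lt_succ_iff, hd])]
      have : ∑ n ∈ range (K+1), (if n ≤ d then (catalan n : ℝ) * (K.choose (2*n)) * ((K-2*n).choose (d-n) : ℝ) else 0)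
          = ∑ n ∈ range (d+1), (catalan n : ℝ) * (K.choose (2*n)) * ((K-2*n).choose (d-n) : ℝ) := by
        have hss : ∑ n ∈ range (d+1), (if n ≤ d then (catalan n : ℝ) * (K.choose (2*n)) * ((K-2*n).choose (d-n) : ℝ) else 0)
            = ∑ n ∈ range (K+1), (if n ≤ d then (catalan n : ℝ) * (K.choose (2*n)) * ((K-2*n).choose (d-n) : ℝ) else 0) := by
          apply Finset.sum_subset
          · intro x hx; simp only [mem_range] at hx ⊢; omega
          · intro n hn hn'
            simp only [mem_range] at hn hn'
            rw [if_neg (by omega)]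
        rw [← hss]
        apply Finset.sum_congr rfl
        intro n hn
        simp only [mem_range] at hn
        rw [if_pos (by omega)]
      rw [this, key K d hd]
    · rw [if_neg (by simp [Nat.lt_succ_iff, hd])]
      apply Finset.sum_eq_zero
      intro n hn
      simp only [mem_range] at hn
      by_cases h : n ≤ d
      · rw [if_pos h]
        by_cases h2 : 2*n ≤ K
        · rw [Nat.choose_eq_zero_of_lt (by omega : K - 2*n < d - n), Nat.cast_zero, mul_zero]
        · rw [Nat.choose_eq_zero_of_lt (by omega : K < 2*n), Nat.cast_zero, mul_zero, zero_mul]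
      · rw [if_neg h]
  have := congrArg (Polynomial.eval y) hPQ
  simpa [Polynomial.eval_finset_sum, mul_assoc] using this

lemma sum_eq_sum_even {f : ℕ → ℝ} (N : ℕ) (hodd : ∀ m, Odd m → f m = 0)
    (htop : ∀ m, N ≤ m → f m = 0) :
    ∑ m ∈ range N, f m = ∑ n ∈ range N, f (2*n) := by
  have h2 : ∀ M, ∑ m ∈ range (2*M), f m = ∑ n ∈ range M, (f (2*n) + f (2*n+1)) := by
    intro M
    induction M with
    | zero => simp
    | succ M ih =>
      rw [Finset.sum_range_succ, ← ih, show 2*(M+1) = (2*M)+1+1 by ring,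
        Finset.sum_range_succ, Finset.sum_range_succ]
      ring
  have hup : ∑ m ∈ range N, f m = ∑ m ∈ range (2*N), f m := by
    apply Finset.sum_subset
    · intro x hx; simp only [mem_range] at hx ⊢; omega
    · intro m hm hm'
      simp only [mem_range] at hm hm'
      exact htop m (by omega)
  rw [hup, h2, Finset.sum_add_distrib]
  have : ∑ n ∈ range N, f (2*n+1) = 0 :=
    Finset.sum_eq_zero fun n _ => hodd _ ⟨n, by ring⟩
  rw [this, add_zero]

/-- (Moments of the Marčenko–Pastur law.)  For `0 < y ≤ 1` and `k ≥ 1`,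
`∫_{(1−√y)²}^{(1+√y)²} xᵏ √((x−(1−√y)²)((1+√y)²−x))/(2πxy) dx
  = Σ_{j=0}^{k−1} (yʲ/(j+1))·C(k,j)·C(k−1,j)`. -/
theorem marchenko_pastur_moments (y : ℝ) (hy0 : 0 < y) (hy1 : y ≤ 1) (k : ℕ) (hk : 1 ≤ k) :
    (∫ x in ((1 - Real.sqrt y) ^ 2)..((1 + Real.sqrt y) ^ 2),
        x ^ k * Real.sqrt ((x - (1 - Real.sqrt y) ^ 2) * ((1 + Real.sqrt y) ^ 2 - x))
          / (2 * Real.pi * x * y))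
      = ∑ j ∈ Finset.range k,
          y ^ j / ((j : ℝ) + 1) * (Nat.choose k j : ℝ) * (Nat.choose (k - 1) j : ℝ) := by
  obtain ⟨K, rfl⟩ : ∃ K, k = K + 1 := ⟨k - 1, by omega⟩
  have hπ : (0:ℝ) < π := Real.pi_pos
  set s := Real.sqrt y with hs
  have hs0 : 0 < s := Real.sqrt_pos.mpr hy0
  have hs2 : s^2 = y := Real.sq_sqrt hy0.le
  set a := (1 - s)^2 with ha
  set b := (1 + s)^2 with hb
  have hab : a ≤ b := by nlinarith
  -- Step 1 : remove the x in the denominator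
  have h1 : (∫ x in a..b, x ^ (K+1) * Real.sqrt ((x - a) * (b - x)) / (2 * π * x * y))
      = ∫ x in a..b, x ^ K * Real.sqrt ((x - a) * (b - x)) / (2 * π * y) := by
    apply intervalIntegral.integral_congr
    intro x hx
    rw [Set.uIcc_of_le hab] at hx
    by_cases hx0 : x = 0
    · subst hx0
      have ha0 : a = 0 := le_antisymm hx.1 (sq_nonneg _)
      rw [ha0]
      simp
    · simp only []
      rw [pow_succ]
      field_simp
  rw [h1]
  -- Step 2 : substitution x = 2 s t + (1+y)
  have hend1 : 2*s*(-1) + (1+y) = a := by rw [ha]; linear_combination -hs2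
  have hend2 : 2*s*1 + (1+y) = b := by rw [hb]; linear_combination -hs2
  have h2 := mul_integral_comp_mul_add (a := (-1:ℝ)) (b := 1)
    (f := fun x => x ^ K * Real.sqrt ((x - a) * (b - x)) / (2 * π * y)) (c := 2*s) (d := 1+y)
  rw [hend1, hend2] at h2
  rw [← h2]
  -- Step 3 : simplify the integrand
  have h3 : ∀ t : ℝ, (2*s*t + (1+y)) ^ K * Real.sqrt (((2*s*t + (1+y)) - a) * (b - (2*s*t + (1+y)))) / (2 * π * y)
      = (s/(π*y)) * ((2*s*t + (1+y)) ^ K * Real.sqrt (1 - t^2)) := by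
    intro t
    have hinner : ((2*s*t + (1+y)) - a) * (b - (2*s*t + (1+y))) = (2*s)^2 * (1 - t^2) := by
      rw [ha, hb]; linear_combination (4*s*t + y - s^2) * hs2
    rw [hinner, Real.sqrt_mul (sq_nonneg (2*s)), Real.sqrt_sq (by positivity : (0:ℝ) ≤ 2*s)]
    field_simp
  rw [intervalIntegral.integral_congr (g := fun t => (s/(π*y)) * ((2*s*t + (1+y)) ^ K * Real.sqrt (1 - t^2)))
    (fun t _ => h3 t)]
  rw [intervalIntegral.integral_const_mul]
  -- Step 4 : expand the power and integrate term by term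
  have hexp : ∀ t : ℝ, (2*s*t + (1+y)) ^ K * Real.sqrt (1 - t^2)
      = ∑ m ∈ range (K+1), ((2*s)^m * (1+y)^(K-m) * ((K.choose m : ℕ) : ℝ)) * (t^m * Real.sqrt (1 - t^2)) := by
    intro t
    rw [add_pow, Finset.sum_mul]
    apply Finset.sum_congr rfl
    intro m _
    rw [mul_pow]
    ring
  rw [intervalIntegral.integral_congr (g := fun t => ∑ m ∈ range (K+1),
      ((2*s)^m * (1+y)^(K-m) * ((K.choose m : ℕ) : ℝ)) * (t^m * Real.sqrt (1 - t^2)))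
    (fun t _ => hexp t)]
  rw [intervalIntegral.integral_finset_sum (fun m _ => by
    apply Continuous.intervalIntegrable
    exact continuous_const.mul ((continuous_pow m).mul ((continuous_const.sub (continuous_pow 2)).sqrt)))]
  have h4 : ∀ m ∈ range (K+1), (∫ t in (-1:ℝ)..1, ((2*s)^m * (1+y)^(K-m) * ((K.choose m : ℕ) : ℝ)) * (t^m * Real.sqrt (1 - t^2)))
      = ((2*s)^m * (1+y)^(K-m) * ((K.choose m : ℕ) : ℝ)) * Jmp m := by
    intro m _
    rw [intervalIntegral.integral_const_mul]
    rfl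
  rw [Finset.sum_congr rfl h4]
  -- Step 5 : only even terms survive
  have h5 : ∑ m ∈ range (K+1), ((2*s)^m * (1+y)^(K-m) * ((K.choose m : ℕ) : ℝ)) * Jmp m
      = ∑ n ∈ range (K+1), ((2*s)^(2*n) * (1+y)^(K-2*n) * ((K.choose (2*n) : ℕ) : ℝ)) * Jmp (2*n) := by
    apply sum_eq_sum_even
    · intro m hm
      obtain ⟨n, rfl⟩ := hm
      rw [Jmp_odd n, mul_zero]
    · intro m hm
      rw [Nat.choose_eq_zero_of_lt (by omega)]
      simp
  rw [h5]
  -- Step 6 : evaluate and recombine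
  have h6 : 2*s * ((s/(π*y)) * ∑ n ∈ range (K+1), ((2*s)^(2*n) * (1+y)^(K-2*n) * ((K.choose (2*n) : ℕ) : ℝ)) * Jmp (2*n))
      = ∑ n ∈ range (K+1), (catalan n : ℝ) * (K.choose (2*n)) * (y+1)^(K-2*n) * y^n := by
    rw [Finset.mul_sum, Finset.mul_sum]
    apply Finset.sum_congr rfl
    intro n _
    rw [Jmp_even, pow_mul, show (2*s)^2 = 4*y by linear_combination 4*hs2, mul_pow]
    have h4n : (4:ℝ)^n ≠ 0 := by positivity
    rw [show (1:ℝ)+y = y+1 by ring]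
    field_simp
    linear_combination ((K.choose (2*n) : ℝ) * (catalan n : ℝ)) * hs2
  rw [h6, poly_id]
  -- Step 7 : match the right-hand side
  apply Finset.sum_congr rfl
  intro j _
  rw [show K+1-1 = K by omega]
  ring
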